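/- For every μ ∈ ℝ, all s, t > 0, and all x, y ∈ [0,1]: Q⁰(s+t, x, y) = ∫₀¹ Q⁰(s, x, z)·Q⁰(t, z, y) dz. -/

import Mathlib

open MeasureTheory

/-- The centered Gauss kernel `g(t,x) = (2πt)^{-1/2} e^{-x²/(2t)}`. -/
noncomputable def gauss (t x : ℝ) : ℝ :=
  (2 * Real.pi * t) ^ (-(1:ℝ)/2) * Real.exp (-x^2 / (2*t))

/-- The periodization `G(t,x) = Σ_{k ∈ ℤ} g(t, x + 2k)`. -/
noncomputable def GG (t x : ℝ) : ℝ := ∑' k : ℤ, gauss t (x + 2*k)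

section Aux

open Real

lemma gauss_pos {t : ℝ} (ht : 0 < t) (x : ℝ) : 0 < gauss t x := by
  unfold gauss
  have : (0:ℝ) < 2 * π * t := by positivity
  positivity

lemma gauss_nonneg {t : ℝ} (ht : 0 < t) (x : ℝ) : 0 ≤ gauss t x := (gauss_pos ht x).le

lemma gauss_even (t x : ℝ) : gauss t (-x) = gauss t x := by unfold gauss; rw [neg_pow]; norm_num

lemma gauss_cont (t : ℝ) : Continuous (gauss t) := by
  unfold gauss; fun_prop

lemma gauss_le_pre {t : ℝ} (ht : 0 < t) (x : ℝ) :
    gauss t x ≤ (2 * π * t) ^ (-(1:ℝ)/2) := by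
  unfold gauss
  have h1 : (0:ℝ) < (2 * π * t) ^ (-(1:ℝ)/2) := by
    have : (0:ℝ) < 2 * π * t := by positivity
    positivity
  nlinarith [exp_le_one_iff.mpr (show -x^2/(2*t) ≤ 0 by apply div_nonpos_of_nonpos_of_nonneg (neg_nonpos.mpr (sq_nonneg x)) (by positivity)), Real.exp_pos (-x^2/(2*t))]

/-- monotonicity-type bound: `gauss t (u + 2k) ≤ pre * exp(R²/(2t)) * exp(-k²/(2t))` for `|u| ≤ R`. -/
lemma gauss_le_bound {t R u : ℝ} (ht : 0 < t) (hu : |u| ≤ R) (k : ℤ) :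
    gauss t (u + 2*k) ≤ (2 * π * t) ^ (-(1:ℝ)/2) * (Real.exp (R^2/(2*t)) * Real.exp (-(k:ℝ)^2/(2*t))) := by
  have hu2 : u^2 ≤ R^2 := by
    have := abs_nonneg u
    nlinarith [sq_abs u]
  have hk : (k:ℝ)^2 - R^2 ≤ (u + 2*k)^2 := by nlinarith [sq_nonneg (2*u + 3*(k:ℝ))]
  unfold gauss
  rw [← Real.exp_add]
  have h1 : (0:ℝ) < (2 * π * t) ^ (-(1:ℝ)/2) := by
    have : (0:ℝ) < 2 * π * t := by positivity
    positivity
  refine mul_le_mul_of_nonneg_left (Real.exp_le_exp.mpr ?_) h1.le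
  rw [← add_div, div_le_div_iff_of_pos_right (by positivity)]
  nlinarith

lemma summable_gexp {t : ℝ} (ht : 0 < t) : Summable (fun k : ℤ => Real.exp (-(k:ℝ)^2/(2*t))) := by
  have h := summable_pow_mul_jacobiTheta₂_term_bound 0 (T := 1/(2*π*t)) (by positivity) 0
  refine h.congr fun n => ?_
  rw [pow_zero, one_mul]
  congr 1
  field_simp
  ring

lemma summable_gauss_row {t u : ℝ} (ht : 0 < t) (hu : |u| ≤ 2) :
    Summable (fun k : ℤ => gauss t (u + 2*k)) := by
  exact Summable.of_nonneg_of_le (fun k => gauss_nonneg ht _) (fun k => gauss_le_bound ht hu k)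
    (((summable_gexp ht).mul_left (Real.exp (2^2/(2*t)))).mul_left ((2 * π * t) ^ (-(1:ℝ)/2)))

/-- Any real can be shifted by an even integer into `[0,2)`. -/
lemma exists_shift (u : ℝ) : ∃ m : ℤ, |u - 2*m| ≤ 2 := by
  refine ⟨⌊u/2⌋, abs_le.mpr ⟨?_, ?_⟩⟩
  · nlinarith [Int.floor_le (u/2)]
  · nlinarith [Int.lt_floor_add_one (u/2)]

lemma gauss_reindex (t u : ℝ) (m : ℤ) :
    (fun k : ℤ => gauss t ((u - 2*m) + 2*((k + m : ℤ) : ℝ))) = fun k : ℤ => gauss t (u + 2*k) := by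
  funext k
  congr 1
  push_cast
  ring

lemma summable_gauss {t : ℝ} (ht : 0 < t) (u : ℝ) :
    Summable (fun k : ℤ => gauss t (u + 2*k)) := by
  obtain ⟨m, hm⟩ := exists_shift u
  have h := summable_gauss_row ht hm
  have h2 := ((Equiv.addRight m).summable_iff
    (f := fun k : ℤ => gauss t ((u - 2*m) + 2*k))).mpr h
  refine h2.congr fun k => ?_
  show gauss t ((u - 2*m) + 2*(((k + m : ℤ)) : ℝ)) = _
  congr 1
  push_cast
  ring

lemma GG_shift (t u : ℝ) (m : ℤ) : GG t (u + 2*m) = GG t u := by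
  unfold GG
  rw [← Equiv.tsum_eq (Equiv.addRight m) (fun k : ℤ => gauss t (u + 2*k))]
  refine tsum_congr fun k => ?_
  show gauss t ((u + 2*m) + 2*k) = gauss t (u + 2*((k + m : ℤ) : ℝ))
  congr 1
  push_cast
  ring

lemma GG_nonneg {t : ℝ} (ht : 0 < t) (u : ℝ) : 0 ≤ GG t u :=
  tsum_nonneg fun k => gauss_nonneg ht _

/-- Uniform bound for the periodization. -/
noncomputable def Cb (t : ℝ) : ℝ :=
  (2 * Real.pi * t) ^ (-(1:ℝ)/2) * Real.exp (2^2/(2*t)) * ∑' k : ℤ, Real.exp (-(k:ℝ)^2/(2*t))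

lemma GG_le {t : ℝ} (ht : 0 < t) (u : ℝ) : GG t u ≤ Cb t := by
  obtain ⟨m, hm⟩ := exists_shift u
  have : GG t u = GG t (u - 2*m) := by
    conv_lhs => rw [show u = (u - 2*m) + 2*m by ring]
    exact GG_shift _ _ m
  rw [this]
  unfold GG Cb
  calc ∑' k : ℤ, gauss t ((u - 2*m) + 2*k)
      ≤ ∑' k : ℤ, (2 * π * t) ^ (-(1:ℝ)/2) * (Real.exp (2^2/(2*t)) * Real.exp (-(k:ℝ)^2/(2*t))) :=
        Summable.tsum_le_tsum (fun k => gauss_le_bound ht hm k) (summable_gauss_row ht hm)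
          (((summable_gexp ht).mul_left _).mul_left _)
    _ = (2 * π * t) ^ (-(1:ℝ)/2) * Real.exp (2^2/(2*t)) * ∑' k : ℤ, Real.exp (-(k:ℝ)^2/(2*t)) := by
        rw [← tsum_mul_left]
        exact tsum_congr fun k => by ring

lemma GG_neg (t u : ℝ) : GG t (-u) = GG t u := by
  unfold GG
  rw [← Equiv.tsum_eq (Equiv.neg ℤ) (fun k : ℤ => gauss t (u + 2*k))]
  refine tsum_congr fun k => ?_
  show gauss t (-u + 2*k) = gauss t (u + 2*((-k : ℤ) : ℝ))
  rw [← gauss_even t (-u + 2*k)]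
  congr 1
  push_cast
  ring

lemma GG_neg_index (t u : ℝ) : GG t u = ∑' k : ℤ, gauss t (u - 2*k) := by
  unfold GG
  rw [← Equiv.tsum_eq (Equiv.neg ℤ) (fun k : ℤ => gauss t (u + 2*k))]
  refine tsum_congr fun k => ?_
  show gauss t (u + 2*((-k : ℤ) : ℝ)) = gauss t (u - 2*k)
  congr 1
  push_cast
  ring

lemma summable_gauss' {t : ℝ} (ht : 0 < t) (u : ℝ) :
    Summable (fun k : ℤ => gauss t (u - 2*k)) := by
  have h := ((Equiv.neg ℤ).summable_iff (f := fun k : ℤ => gauss t (u + 2*k))).mpr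
    (summable_gauss ht u)
  refine h.congr fun k => ?_
  show gauss t (u + 2*((-k : ℤ) : ℝ)) = gauss t (u - 2*k)
  congr 1
  push_cast
  ring

lemma GG_cont {t : ℝ} (ht : 0 < t) : Continuous (GG t) := by
  rw [continuous_iff_continuousAt]
  intro u₀
  set R : ℝ := |u₀| + 1 with hR
  have hcont : ContinuousOn (GG t) (Set.Icc (-R) R) := by
    unfold GG
    refine continuousOn_tsum (u := fun k : ℤ =>
        (2 * π * t) ^ (-(1:ℝ)/2) * (Real.exp (R^2/(2*t)) * Real.exp (-(k:ℝ)^2/(2*t))))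
      (fun k => ((gauss_cont t).comp (by fun_prop)).continuousOn) ?_ (fun k x hx => ?_)
    · exact ((summable_gexp ht).mul_left _).mul_left _
    · rw [Real.norm_eq_abs, abs_of_nonneg (gauss_nonneg ht _)]
      exact gauss_le_bound ht (abs_le.mpr ⟨hx.1, hx.2⟩) k
  refine hcont.continuousAt (Icc_mem_nhds ?_ ?_)
  · nlinarith [abs_nonneg u₀, neg_abs_le u₀]
  · nlinarith [le_abs_self u₀]

lemma rpow_negHalf_eq {a : ℝ} (ha : 0 ≤ a) : a ^ (-(1:ℝ)/2) = (Real.sqrt a)⁻¹ := by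
  rw [show (-(1:ℝ)/2) = -(1/2:ℝ) by norm_num, Real.rpow_neg ha, ← Real.sqrt_eq_rpow]

lemma gauss_conv {s t : ℝ} (hs : 0 < s) (ht : 0 < t) (c : ℝ) :
    ∫ z : ℝ, gauss s z * gauss t (c - z) = gauss (s+t) c := by
  have hst : 0 < s + t := by linarith
  set b : ℝ := (s+t)/(2*s*t) with hb
  have hbpos : 0 < b := by positivity
  set m : ℝ := s*c/(s+t) with hm
  have hexp : ∀ z : ℝ, -z^2/(2*s) + -(c-z)^2/(2*t) = -c^2/(2*(s+t)) + -b*(z-m)^2 := by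
    intro z
    rw [hb, hm]
    field_simp
    ring
  have key : ∀ z : ℝ, gauss s z * gauss t (c - z) =
      ((2*π*s) ^ (-(1:ℝ)/2) * (2*π*t) ^ (-(1:ℝ)/2) * Real.exp (-c^2/(2*(s+t)))) *
        Real.exp (-b*(z-m)^2) := by
    intro z
    calc gauss s z * gauss t (c-z)
        = (2*π*s) ^ (-(1:ℝ)/2) * (2*π*t) ^ (-(1:ℝ)/2) *
            Real.exp (-z^2/(2*s) + -(c-z)^2/(2*t)) := by
          unfold gauss; rw [Real.exp_add]; ring
      _ = _ := by rw [hexp z, Real.exp_add]; ring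
  simp only [key]
  rw [MeasureTheory.integral_const_mul]
  have h2 : ∫ z : ℝ, Real.exp (-b*(z-m)^2) = Real.sqrt (π / b) := by
    rw [integral_sub_right_eq_self (fun x => Real.exp (-b*x^2)) m, integral_gaussian]
  rw [h2]
  unfold gauss
  rw [rpow_negHalf_eq (by positivity : (0:ℝ) ≤ 2*π*s),
    rpow_negHalf_eq (by positivity : (0:ℝ) ≤ 2*π*t),
    rpow_negHalf_eq (by positivity : (0:ℝ) ≤ 2*π*(s+t))]
  have hquot : π / b = (2*π*s) * (2*π*t) / (2*π*(s+t)) := by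
    rw [hb]; field_simp
  rw [hquot, Real.sqrt_div (by positivity) _, Real.sqrt_mul (by positivity)]
  have h1 : Real.sqrt (2*π*s) ≠ 0 := by positivity
  have h3 : Real.sqrt (2*π*t) ≠ 0 := by positivity
  have h4 : Real.sqrt (2*π*(s+t)) ≠ 0 := by positivity
  field_simp
  rw [← Real.sqrt_mul (by positivity), ← Real.sqrt_mul (by positivity)]
  congr 1; ring

lemma gauss_conv_shift {s t : ℝ} (hs : 0 < s) (ht : 0 < t) (a c : ℝ) :
    ∫ w : ℝ, gauss s (w - a) * gauss t (c - w) = gauss (s+t) (c - a) := by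
  have hfun : (fun w : ℝ => gauss s (w - a) * gauss t (c - w))
      = fun w => (fun z : ℝ => gauss s z * gauss t ((c - a) - z)) (w - a) := by
    funext w
    show _ = gauss s (w - a) * gauss t ((c - a) - (w - a))
    congr 2
    ring
  rw [hfun, integral_sub_right_eq_self (fun z : ℝ => gauss s z * gauss t ((c - a) - z)) a]
  exact gauss_conv hs ht (c - a)

lemma gauss_integrable {t : ℝ} (ht : 0 < t) : Integrable (gauss t) := by
  unfold gauss
  apply Integrable.const_mul
  have h : Integrable (fun x : ℝ => Real.exp (-(1/(2*t)) * x^2)) :=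
    integrable_exp_neg_mul_sq (by positivity)
  exact h.congr (ae_of_all _ fun x => congrArg Real.exp (by ring))

lemma integrable_mul_gauss {t : ℝ} (ht : 0 < t) {φ : ℝ → ℝ}
    (hφm : AEStronglyMeasurable φ volume) (C : ℝ) (hφb : ∀ w, |φ w| ≤ C) (c : ℝ) :
    Integrable (fun w => φ w * gauss t (c - w)) := by
  refine Integrable.mono' (((gauss_integrable ht).comp_sub_left c).const_mul C)
    (hφm.mul ((gauss_cont t).comp (by fun_prop)).aestronglyMeasurable)
    (ae_of_all _ fun w => ?_)
  rw [norm_mul, Real.norm_eq_abs, Real.norm_eq_abs, abs_of_nonneg (gauss_nonneg ht _)]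
  exact mul_le_mul_of_nonneg_right (hφb w) (gauss_nonneg ht _)

lemma gauss_le_bound' {t R u : ℝ} (ht : 0 < t) (hu : |u| ≤ R) (k : ℤ) :
    gauss t (u - 2*k) ≤ (2 * π * t) ^ (-(1:ℝ)/2) *
      (Real.exp (R^2/(2*t)) * Real.exp (-(k:ℝ)^2/(2*t))) := by
  have h := gauss_le_bound ht hu (-k)
  rw [Int.cast_neg, show u + 2*(-(k:ℝ)) = u - 2*k by ring, neg_sq] at h
  exact h

section Main

variable {s t x y : ℝ}

lemma Hs_cont (hs : 0 < s) (x : ℝ) : Continuous (fun z : ℝ => GG s (z-x) - GG s (z+x)) :=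
  ((GG_cont hs).comp (by fun_prop)).sub ((GG_cont hs).comp (by fun_prop))

lemma Hs_bound (hs : 0 < s) (x z : ℝ) : |GG s (z-x) - GG s (z+x)| ≤ 2 * Cb s := by
  have h1 := GG_nonneg hs (z-x)
  have h2 := GG_le hs (z-x)
  have h3 := GG_nonneg hs (z+x)
  have h4 := GG_le hs (z+x)
  rw [abs_le]
  constructor <;> linarith

lemma Hs_odd (s x : ℝ) (z : ℝ) :
    GG s ((-z)-x) - GG s ((-z)+x) = -(GG s (z-x) - GG s (z+x)) := by
  rw [show -z - x = -(z + x) by ring, show -z + x = -(z - x) by ring, GG_neg, GG_neg]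
  ring

lemma Hs_per (s x : ℝ) (z : ℝ) (k : ℤ) :
    GG s ((z + 2*k)-x) - GG s ((z + 2*k)+x) = GG s (z-x) - GG s (z+x) := by
  rw [show z + 2*(k:ℝ) - x = (z - x) + 2*k by ring, show z + 2*(k:ℝ) + x = (z + x) + 2*k by ring,
    GG_shift, GG_shift]

/-- Step E/F/G: the full-line integral of `H_s(x,·) g_t(y-·)` equals `H_{s+t}(x,y)`. -/
lemma stepE (hs : 0 < s) (ht : 0 < t) (x y : ℝ) :
    ∫ w : ℝ, (GG s (w-x) - GG s (w+x)) * gauss t (y-w)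
      = GG (s+t) (y-x) - GG (s+t) (y+x) := by
  have hst : 0 < s + t := by linarith
  -- the j-th summand
  set f : ℤ → ℝ → ℝ := fun j w =>
    (gauss s (w - (x - 2*j)) - gauss s (w - (-x - 2*j))) * gauss t (y - w) with hf
  have hjint : ∀ a : ℝ, Integrable (fun w => gauss s (w - a) * gauss t (y - w)) := fun a =>
    integrable_mul_gauss ht ((gauss_cont s).comp (by fun_prop)).aestronglyMeasurable
      ((2 * π * s) ^ (-(1:ℝ)/2))
      (fun w => by
        show |gauss s (w - a)| ≤ _
        rw [abs_of_nonneg (gauss_nonneg hs _)]; exact gauss_le_pre hs _) y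
  have hmeas : ∀ j : ℤ, AEStronglyMeasurable (f j) volume := fun j => by
    apply Continuous.aestronglyMeasurable
    have := gauss_cont s
    have := gauss_cont t
    fun_prop
  -- pointwise expansion of the integrand
  have hFeq : (fun w => (GG s (w-x) - GG s (w+x)) * gauss t (y-w)) = fun w => ∑' j : ℤ, f j w := by
    funext w
    show (GG s (w-x) - GG s (w+x)) * gauss t (y-w) = _
    rw [show GG s (w-x) = ∑' j : ℤ, gauss s (w - (x - 2*j)) from
        tsum_congr fun j => by rw [show w - x + 2*(j:ℝ) = w - (x - 2*j) by ring],
      show GG s (w+x) = ∑' j : ℤ, gauss s (w - (-x - 2*j)) from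
        tsum_congr fun j => by rw [show w + x + 2*(j:ℝ) = w - (-x - 2*j) by ring]]
    rw [← Summable.tsum_sub ((summable_gauss hs (w-x)).congr fun j => by
          rw [show w - x + 2*(j:ℝ) = w - (x - 2*j) by ring])
        ((summable_gauss hs (w+x)).congr fun j => by
          rw [show w + x + 2*(j:ℝ) = w - (-x - 2*j) by ring]),
      ← tsum_mul_right]
  -- the convolution values
  have hconv1 : ∀ j : ℤ, ∫ w : ℝ, gauss s (w - (x - 2*j)) * gauss t (y - w)
      = gauss (s+t) ((y - x) + 2*j) := fun j => by
    rw [gauss_conv_shift hs ht (x - 2*j) y, show y - (x - 2*(j:ℝ)) = (y - x) + 2*j by ring]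
  have hconv2 : ∀ j : ℤ, ∫ w : ℝ, gauss s (w - (-x - 2*j)) * gauss t (y - w)
      = gauss (s+t) ((y + x) + 2*j) := fun j => by
    rw [gauss_conv_shift hs ht (-x - 2*j) y, show y - (-x - 2*(j:ℝ)) = (y + x) + 2*j by ring]
  -- finiteness of the lintegral sum
  have hfin : ∑' j : ℤ, ∫⁻ w, ‖f j w‖₊ ≠ ⊤ := by
    have hb : ∀ j : ℤ, ∫⁻ w, ‖f j w‖₊
        ≤ ENNReal.ofReal (gauss (s+t) ((y-x) + 2*j) + gauss (s+t) ((y+x) + 2*j)) := by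
      intro j
      have hint : Integrable (fun w => gauss s (w - (x - 2*j)) * gauss t (y - w)
          + gauss s (w - (-x - 2*j)) * gauss t (y - w)) := (hjint _).add (hjint _)
      calc ∫⁻ w, ‖f j w‖₊
          ≤ ∫⁻ w, ENNReal.ofReal (gauss s (w - (x - 2*j)) * gauss t (y - w)
              + gauss s (w - (-x - 2*j)) * gauss t (y - w)) := by
            refine lintegral_mono fun w => ?_
            rw [← enorm_eq_nnnorm, ← ofReal_norm_eq_enorm]
            refine ENNReal.ofReal_le_ofReal ?_
            rw [hf]
            rw [norm_mul, Real.norm_eq_abs, Real.norm_eq_abs,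
              abs_of_nonneg (gauss_nonneg ht _), ← add_mul]
            refine mul_le_mul_of_nonneg_right ?_ (gauss_nonneg ht _)
            have hA := gauss_nonneg hs (w - (x - 2*j))
            have hB := gauss_nonneg hs (w - (-x - 2*j))
            exact abs_le.mpr ⟨by linarith, by linarith⟩
        _ = ENNReal.ofReal (gauss (s+t) ((y-x) + 2*j) + gauss (s+t) ((y+x) + 2*j)) := by
            rw [← ofReal_integral_eq_lintegral_ofReal hint
              (ae_of_all _ fun w => add_nonneg (mul_nonneg (gauss_nonneg hs _) (gauss_nonneg ht _))
                (mul_nonneg (gauss_nonneg hs _) (gauss_nonneg ht _)))]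
            congr 1
            rw [integral_add (hjint _) (hjint _), hconv1 j, hconv2 j]
    have hsummable : Summable (fun j : ℤ =>
        gauss (s+t) ((y-x) + 2*j) + gauss (s+t) ((y+x) + 2*j)) :=
      (summable_gauss hst (y-x)).add (summable_gauss hst (y+x))
    refine ne_top_of_le_ne_top ?_ (ENNReal.tsum_le_tsum hb)
    rw [← ENNReal.ofReal_tsum_of_nonneg
      (fun j => add_nonneg (gauss_nonneg hst _) (gauss_nonneg hst _)) hsummable]
    exact ENNReal.ofReal_ne_top
  rw [hFeq, integral_tsum hmeas hfin]
  have : ∀ j : ℤ, ∫ w, f j w = gauss (s+t) ((y-x) + 2*j) - gauss (s+t) ((y+x) + 2*j) := by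
    intro j
    rw [hf]
    simp only [sub_mul]
    rw [integral_sub (hjint _) (hjint _), hconv1 j, hconv2 j]
  rw [tsum_congr this, Summable.tsum_sub (summable_gauss hst (y-x)) (summable_gauss hst (y+x))]
  rfl

end Main

section Main2

variable {s t x y : ℝ}

/-- Step D: tiling of `ℝ` by intervals of length 2. -/
lemma stepD (hs : 0 < s) (ht : 0 < t) (x y : ℝ) :
    ∑' k : ℤ, ∫ w in Set.Ioc ((2*(k:ℝ))-1) ((2*(k:ℝ))+1),
        (GG s (w-x) - GG s (w+x)) * gauss t (y-w)
      = ∫ w : ℝ, (GG s (w-x) - GG s (w+x)) * gauss t (y-w) := by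
  have hFint : Integrable (fun w => (GG s (w-x) - GG s (w+x)) * gauss t (y-w)) :=
    integrable_mul_gauss ht (Hs_cont hs x).aestronglyMeasurable (2 * Cb s)
      (fun w => Hs_bound hs x w) y
  have hunion : (⋃ k : ℤ, Set.Ioc ((2*(k:ℝ))-1) ((2*(k:ℝ))+1)) = Set.univ := by
    ext w
    simp only [Set.mem_iUnion, Set.mem_Ioc, Set.mem_univ, iff_true]
    refine ⟨⌈(w-1)/2⌉, ?_, ?_⟩
    · nlinarith [Int.ceil_lt_add_one ((w-1)/2)]
    · nlinarith [Int.le_ceil ((w-1)/2)]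
  have hdisj : Pairwise (Function.onFun Disjoint
      fun k : ℤ => Set.Ioc ((2*(k:ℝ))-1) ((2*(k:ℝ))+1)) := by
    intro k k' hkk'
    refine Set.Ioc_disjoint_Ioc.mpr ?_
    rcases lt_or_gt_of_ne hkk' with h | h
    · have hc : (k:ℝ) + 1 ≤ k' := by exact_mod_cast h
      calc min (2*(k:ℝ)+1) (2*(k':ℝ)+1) ≤ 2*(k:ℝ)+1 := min_le_left _ _
        _ ≤ 2*(k':ℝ)-1 := by linarith
        _ ≤ max (2*(k:ℝ)-1) (2*(k':ℝ)-1) := le_max_right _ _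
    · have hc : (k':ℝ) + 1 ≤ k := by exact_mod_cast h
      calc min (2*(k:ℝ)+1) (2*(k':ℝ)+1) ≤ 2*(k':ℝ)+1 := min_le_right _ _
        _ ≤ 2*(k:ℝ)-1 := by linarith
        _ ≤ max (2*(k:ℝ)-1) (2*(k':ℝ)-1) := le_max_left _ _
  have h := MeasureTheory.integral_iUnion (fun k : ℤ => measurableSet_Ioc) hdisj
    (by rw [hunion]; exact hFint.integrableOn)
  rw [hunion, setIntegral_univ] at h
  exact h.symm

/-- Steps B and C: reflection and periodic shift. -/
lemma stepBC (hs : 0 < s) (ht : 0 < t) (x y : ℝ) (k : ℤ) :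
    ∫ z in Set.Ioc (0:ℝ) 1, (GG s (z-x) - GG s (z+x))
        * (gauss t ((y-z) - 2*k) - gauss t ((y+z) - 2*k))
      = ∫ w in Set.Ioc ((2*(k:ℝ))-1) ((2*(k:ℝ))+1),
          (GG s (w-x) - GG s (w+x)) * gauss t (y-w) := by
  have hcg := gauss_cont t
  have hcH := Hs_cont hs x
  have hi1 : IntervalIntegrable (fun z => (GG s (z-x) - GG s (z+x)) * gauss t ((y-z) - 2*k))
      volume 0 1 := (hcH.mul (hcg.comp (by fun_prop))).intervalIntegrable 0 1
  have hi2 : IntervalIntegrable (fun z => (GG s (z-x) - GG s (z+x)) * gauss t ((y+z) - 2*k))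
      volume 0 1 := (hcH.mul (hcg.comp (by fun_prop))).intervalIntegrable 0 1
  have hi3 : IntervalIntegrable (fun z => (GG s (z-x) - GG s (z+x)) * gauss t ((y-z) - 2*k))
      volume (-1) 0 := (hcH.mul (hcg.comp (by fun_prop))).intervalIntegrable (-1) 0
  have hi4 : IntervalIntegrable (fun z => (GG s (z-x) - GG s (z+x)) * gauss t ((y-z) - 2*k))
      volume 0 1 := (hcH.mul (hcg.comp (by fun_prop))).intervalIntegrable 0 1
  rw [← intervalIntegral.integral_of_le zero_le_one,
    ← intervalIntegral.integral_of_le (show (2*(k:ℝ))-1 ≤ 2*(k:ℝ)+1 by linarith)]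
  have hexpand : (fun z => (GG s (z-x) - GG s (z+x))
      * (gauss t ((y-z) - 2*k) - gauss t ((y+z) - 2*k)))
      = fun z => (GG s (z-x) - GG s (z+x)) * gauss t ((y-z) - 2*k)
        - (GG s (z-x) - GG s (z+x)) * gauss t ((y+z) - 2*k) := by
    funext z; ring
  rw [hexpand, intervalIntegral.integral_sub hi1 hi2]
  -- reflection
  have hrefl : ∫ z in (0:ℝ)..1, (GG s (z-x) - GG s (z+x)) * gauss t ((y+z) - 2*k)
      = - ∫ z in (-1:ℝ)..0, (GG s (z-x) - GG s (z+x)) * gauss t ((y-z) - 2*k) := by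
    have h := intervalIntegral.integral_comp_neg (a := (0:ℝ)) (b := 1)
      (fun w => (GG s (w-x) - GG s (w+x)) * gauss t ((y-w) - 2*k))
    rw [neg_zero] at h
    rw [← h, ← intervalIntegral.integral_neg]
    apply intervalIntegral.integral_congr
    intro z _
    show (GG s (z-x) - GG s (z+x)) * gauss t ((y+z) - 2*k)
      = -((GG s ((-z)-x) - GG s ((-z)+x)) * gauss t ((y - -z) - 2*k))
    rw [Hs_odd s x z, show y - -z - 2*(k:ℝ) = (y+z) - 2*k by ring]
    ring
  rw [hrefl, sub_neg_eq_add, add_comm,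
    intervalIntegral.integral_add_adjacent_intervals hi3 hi4]
  -- shift by 2k
  have hshift : (fun z => (GG s (z-x) - GG s (z+x)) * gauss t ((y-z) - 2*k))
      = fun z => (fun w => (GG s (w-x) - GG s (w+x)) * gauss t (y-w)) (z + 2*k) := by
    funext z
    show _ = (GG s ((z + 2*k)-x) - GG s ((z + 2*k)+x)) * gauss t (y-(z + 2*k))
    rw [Hs_per s x z k, show y - (z + 2*(k:ℝ)) = (y - z) - 2*k by ring]
  rw [hshift, intervalIntegral.integral_comp_add_right
    (fun w => (GG s (w-x) - GG s (w+x)) * gauss t (y-w)) (2*k),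
    show (-1:ℝ) + 2*(k:ℝ) = 2*(k:ℝ) - 1 by ring, show (1:ℝ) + 2*(k:ℝ) = 2*(k:ℝ) + 1 by ring]

end Main2

lemma Cb_nonneg {t : ℝ} (ht : 0 < t) : 0 ≤ Cb t := by
  unfold Cb
  refine mul_nonneg (mul_nonneg (Real.rpow_nonneg (by positivity) _) (Real.exp_pos _).le)
    (tsum_nonneg fun k => (Real.exp_pos _).le)

section Main3

variable {s t x y : ℝ}

/-- Step A: expand the second factor and swap sum and integral over `[0,1]`. -/
lemma stepA (hs : 0 < s) (ht : 0 < t) (x : ℝ) (hy : y ∈ Set.Icc (0:ℝ) 1) :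
    ∫ z in (0:ℝ)..1, (GG s (z-x) - GG s (z+x)) * (GG t (y-z) - GG t (y+z))
      = ∑' k : ℤ, ∫ z in Set.Ioc (0:ℝ) 1,
          (GG s (z-x) - GG s (z+x)) * (gauss t ((y-z) - 2*k) - gauss t ((y+z) - 2*k)) := by
  rw [intervalIntegral.integral_of_le zero_le_one]
  have hHt : (fun z => (GG s (z-x) - GG s (z+x)) * (GG t (y-z) - GG t (y+z)))
      = fun z => ∑' k : ℤ,
          (GG s (z-x) - GG s (z+x)) * (gauss t ((y-z) - 2*k) - gauss t ((y+z) - 2*k)) := by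
    funext z
    rw [GG_neg_index t (y-z), GG_neg_index t (y+z),
      ← Summable.tsum_sub (summable_gauss' ht (y-z)) (summable_gauss' ht (y+z)), ← tsum_mul_left]
  rw [hHt]
  set cA : ℤ → ℝ := fun k => (2 * Cb s) *
    (2 * ((2 * π * t) ^ (-(1:ℝ)/2) * (Real.exp (2^2/(2*t)) * Real.exp (-(k:ℝ)^2/(2*t))))) with hcA
  have hcAsum : Summable cA :=
    ((((summable_gexp ht).mul_left _).mul_left _).mul_left _).mul_left _
  have hcAnn : ∀ k : ℤ, 0 ≤ cA k := fun k => by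
    rw [hcA]
    have h1 := Cb_nonneg hs
    have h2 : (0:ℝ) ≤ (2 * π * t) ^ (-(1:ℝ)/2) := Real.rpow_nonneg (by positivity) _
    positivity
  refine integral_tsum (fun k => Continuous.aestronglyMeasurable ?_) ?_
  · exact (Hs_cont hs x).mul (((gauss_cont t).comp (by fun_prop)).sub
      ((gauss_cont t).comp (by fun_prop)))
  · have hbk : ∀ k : ℤ, ∫⁻ z in Set.Ioc (0:ℝ) 1,
        ‖(GG s (z-x) - GG s (z+x)) * (gauss t ((y-z) - 2*k) - gauss t ((y+z) - 2*k))‖₊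
        ≤ ENNReal.ofReal (cA k) := by
      intro k
      calc ∫⁻ z in Set.Ioc (0:ℝ) 1,
            ‖(GG s (z-x) - GG s (z+x)) * (gauss t ((y-z) - 2*k) - gauss t ((y+z) - 2*k))‖₊
          ≤ ∫⁻ _ in Set.Ioc (0:ℝ) 1, ENNReal.ofReal (cA k) := by
            refine lintegral_mono_ae ((ae_restrict_iff' measurableSet_Ioc).mpr
              (ae_of_all _ fun z hz => ?_))
            rw [← enorm_eq_nnnorm, ← ofReal_norm_eq_enorm]
            refine ENNReal.ofReal_le_ofReal ?_
            have hz1 := hz.1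
            have hz2 := hz.2
            have hy1 := hy.1
            have hy2 := hy.2
            have hu1 : |y - z| ≤ 2 := abs_le.mpr ⟨by linarith, by linarith⟩
            have hu2 : |y + z| ≤ 2 := abs_le.mpr ⟨by linarith, by linarith⟩
            have hb1 := gauss_le_bound' ht hu1 k
            have hb2 := gauss_le_bound' ht hu2 k
            have hg1 := gauss_nonneg ht ((y-z) - 2*k)
            have hg2 := gauss_nonneg ht ((y+z) - 2*k)
            have hH := Hs_bound hs x z
            have hCb := Cb_nonneg hs
            have habs : |gauss t ((y-z) - 2*k) - gauss t ((y+z) - 2*k)|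
                ≤ 2 * ((2 * π * t) ^ (-(1:ℝ)/2)
                  * (Real.exp (2^2/(2*t)) * Real.exp (-(k:ℝ)^2/(2*t)))) := by
              refine (abs_le.mpr ⟨by linarith, by linarith⟩ :
                |gauss t ((y-z) - 2*k) - gauss t ((y+z) - 2*k)|
                  ≤ gauss t ((y-z) - 2*k) + gauss t ((y+z) - 2*k)).trans (by linarith)
            simp only [hcA]
            rw [norm_mul, Real.norm_eq_abs, Real.norm_eq_abs]
            exact mul_le_mul hH habs (abs_nonneg _) (by linarith)
          _ = ENNReal.ofReal (cA k) := by
            rw [MeasureTheory.setLIntegral_const, Real.volume_Ioc]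
            norm_num
    refine ne_top_of_le_ne_top ?_ (ENNReal.tsum_le_tsum hbk)
    rw [← ENNReal.ofReal_tsum_of_nonneg hcAnn hcAsum]
    exact ENNReal.ofReal_ne_top

end Main3

lemma kernel_CK {s t x y : ℝ} (hs : 0 < s) (ht : 0 < t) (hy : y ∈ Set.Icc (0:ℝ) 1) (x' : ℝ) :
    GG (s+t) (y-x) - GG (s+t) (y+x)
      = ∫ z in (0:ℝ)..1, (GG s (z-x) - GG s (z+x)) * (GG t (y-z) - GG t (y+z)) := by
  rw [stepA hs ht x hy, tsum_congr (fun k => stepBC hs ht x y k), stepD hs ht x y,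
    stepE hs ht x y]


end Aux

/-- The Dirichlet kernel `Q⁰(t,x,y) = e^{μ(y−x)−μ²t/2}(G(t,y−x) − G(t,y+x))`. -/
noncomputable def Q0 (μ t x y : ℝ) : ℝ :=
  Real.exp (μ*(y-x) - μ^2*t/2) * (GG t (y-x) - GG t (y+x))

/-- Chapman–Kolmogorov, first identity of (A.2):
`Q⁰(s+t,x,y) = ∫₀¹ Q⁰(s,x,z) Q⁰(t,z,y) dz`. -/
theorem stmt19 (μ s t x y : ℝ) (hs : 0 < s) (ht : 0 < t)
    (hx : x ∈ Set.Icc (0:ℝ) 1) (hy : y ∈ Set.Icc (0:ℝ) 1) :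
    Q0 μ (s+t) x y = ∫ z in (0:ℝ)..1, Q0 μ s x z * Q0 μ t z y := by
  have hmain := kernel_CK (x := x) hs ht hy 0
  unfold Q0
  have hintegrand : (fun z => Real.exp (μ*(z-x) - μ^2*s/2) * (GG s (z-x) - GG s (z+x))
        * (Real.exp (μ*(y-z) - μ^2*t/2) * (GG t (y-z) - GG t (y+z))))
      = fun z => Real.exp (μ*(y-x) - μ^2*(s+t)/2)
        * ((GG s (z-x) - GG s (z+x)) * (GG t (y-z) - GG t (y+z))) := by
    funext z
    rw [mul_mul_mul_comm, ← Real.exp_add,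
      show μ*(z-x) - μ^2*s/2 + (μ*(y-z) - μ^2*t/2) = μ*(y-x) - μ^2*(s+t)/2 by ring]
  rw [hintegrand, intervalIntegral.integral_const_mul, ← hmain]
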